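/- For m = 1 and 0 < λ < 1 with λ ≠ 1, there exists a nonconstant polynomial g of degree at most 3 with g(0) = 0 satisfying g^{(j)}(1/2) − g^{(j)}(−1/2) = 0 and g^{(j)}(λ/2) − g^{(j)}(−λ/2) = 0 for j = 1, and g(1/2) − g(−1/2) = 0, g(λ/2) − g(−λ/2) = 1; i.e., the generalized eigenvector equation D̂(0) ĝ = e₁ is solvable. -/

import Mathlib

open Polynomial

/-- Dispersion analysis, odd case `m = 1`: for `0 < λ < 1` there exists a
nonconstant polynomial `g` of degree at most `3` with `g(0) = 0` satisfying the
homogeneous conditions `g(1/2) = g(−1/2)`, `g'(1/2) = g'(−1/2)`,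
`g'(λ/2) = g'(−λ/2)` and the inhomogeneous condition `g(λ/2) − g(−λ/2) = 1`;
i.e. the generalized eigenvector equation `D̂(0) ĝ = e₁` is solvable. -/
theorem dispersion_m_one_generalized_eigenvector
    (lam : ℝ) (h0 : 0 < lam) (h1 : lam < 1) :
    ∃ g : Polynomial ℝ, g.degree ≤ 3 ∧ 0 < g.natDegree ∧
      g.eval 0 = 0 ∧
      g.eval (1 / 2) - g.eval (-(1 / 2)) = 0 ∧
      g.eval (lam / 2) - g.eval (-(lam / 2)) = 1 ∧
      g.derivative.eval (1 / 2) - g.derivative.eval (-(1 / 2)) = 0 ∧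
      g.derivative.eval (lam / 2) - g.derivative.eval (-(lam / 2)) = 0 := by
  have hd : lam - lam ^ 3 ≠ 0 := by
    have : 0 < lam - lam ^ 3 := by nlinarith [mul_pos (mul_pos h0 (sub_pos.mpr h1)) (by linarith : (0:ℝ) < 1 + lam)]
    linarith
  set a : ℝ := 1 / (lam - lam ^ 3) with ha
  have haz : a ≠ 0 := one_div_ne_zero hd
  refine ⟨C a * X + C (-4 * a) * X ^ 3, ?_, ?_, ?_, ?_, ?_, ?_, ?_⟩
  · compute_degree
  · have h3 : (C a * X + C (-4 * a) * X ^ 3).natDegree = 3 := by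
      compute_degree!
    omega
  · simp
  · simp; ring
  · simp only [eval_add, eval_mul, eval_C, eval_X, eval_pow, ha]
    field_simp
    have h2 : (1:ℝ) - lam ^ 2 ≠ 0 := ne_of_gt (by nlinarith)
    rw [div_eq_iff h2]
    ring
  · simp
  · simp
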